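/- The extended global score for multi-attribute explanations has sensitivity at most 1: let ℓ ≥ 1, let AC assign to each cluster label c ∈ C (with |C| ≥ 2) a set AC(c) of ℓ attributes, and let Cand(AC) = { (c, A) : c ∈ C, A ∈ AC(c) }. For nonnegative weights λ_Int, λ_Suf, λ_Div summing to 1, define GlScore_λ^ℓ(D, f, AC) = λ_Int·(1/|Cand(AC)|) Σ_{(c,A)∈Cand(AC)} Int_p(D, f, c, A) + λ_Suf·(1/|Cand(AC)|) Σ_{(c,A)∈Cand(AC)} Suf_p(D, f, c, A) + λ_Div·(1/binom(|Cand(AC)|,2)) Σ_{unordered pairs {(c,A),(c',A')}⊆Cand(AC)} d(D, f, c, c', A, A'). Then for every dataset D and tuple t, writing D' = D + {t}, |GlScore_λ^ℓ(D', f, AC) − GlScore_λ^ℓ(D, f, AC)| ≤ 1. -/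

import Mathlib

noncomputable section

open scoped Classical

/-- The cluster of label `c`: the sub-multiset of tuples of `D` mapped to `c` by `f`. -/
def cl {T C : Type*} [DecidableEq C] (D : Multiset T) (f : T → C) (c : C) : Multiset T :=
  D.filter (fun t => f t = c)

/-- Low-sensitivity interestingness. -/
def Intp {T V C : Type*} [Fintype V] [DecidableEq V] [DecidableEq C]
    (D : Multiset T) (f : T → C) (c : C) (A : T → V) : ℝ :=
  (1 / 2) * ∑ a : V,
    |(((cl D f c).map A).count a : ℝ) -
      ((Multiset.card (cl D f c) : ℝ) / (Multiset.card D : ℝ)) * ((D.map A).count a : ℝ)|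

/-- Low-sensitivity sufficiency. -/
def Sufp {T V C : Type*} [Fintype V] [DecidableEq V] [DecidableEq C]
    (D : Multiset T) (f : T → C) (c : C) (A : T → V) : ℝ :=
  ∑ a : V,
    if 0 < ((cl D f c).map A).count a then
      ((((cl D f c).map A).count a : ℝ)) ^ 2 / (((D.map A).count a : ℝ))
    else 0

/-- Pairwise diversity. -/
def pdiv {T V C : Type*} [Fintype V] [DecidableEq V] [DecidableEq C]
    (D : Multiset T) (f : T → C) (c c' : C) (Ac Ac' : T → V) : ℝ :=
  (min (Multiset.card (cl D f c)) (Multiset.card (cl D f c')) : ℝ) *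
    (if Ac = Ac' then
      ((1 / 2) * ∑ a : V,
        |(((cl D f c).map Ac).count a : ℝ) / (max (Multiset.card (cl D f c)) 1 : ℝ) -
          (((cl D f c').map Ac).count a : ℝ) / (max (Multiset.card (cl D f c')) 1 : ℝ)|)
      else 1)

/-- `Cand(AC) = { (c, A) : c ∈ C, A ∈ AC(c) }` for a multi-attribute combination
assigning each label a finite set of attributes. -/
def Cand {T V C : Type*} [Fintype C] (AC : C → Finset (T → V)) :
    Finset (C × (T → V)) :=
  Finset.univ.biUnion (fun c => (AC c).image (fun A => (c, A)))

/-- The extended global score for multi-attribute explanations; the sum over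
unordered pairs of distinct candidates is written as half the sum over ordered
pairs of distinct candidates (legitimate since `d` is symmetric). -/
def GlScoreL {T V C : Type*} [Fintype V] [DecidableEq V] [Fintype C] [DecidableEq C]
    (wInt wSuf wDiv : ℝ) (D : Multiset T) (f : T → C) (AC : C → Finset (T → V)) : ℝ :=
  wInt * ((1 / ((Cand AC).card : ℝ)) * ∑ p ∈ Cand AC, Intp D f p.1 p.2) +
  wSuf * ((1 / ((Cand AC).card : ℝ)) * ∑ p ∈ Cand AC, Sufp D f p.1 p.2) +
  wDiv * ((1 / (((Cand AC).card.choose 2 : ℕ) : ℝ)) *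
    ((1 / 2) * ∑ p ∈ Cand AC, ∑ q ∈ Cand AC,
      if p = q then 0 else pdiv D f p.1 q.1 p.2 q.2))


set_option linter.unusedSectionVars false
set_option maxHeartbeats 2000000
section sens_helpers
variable {T V C : Type*} [Fintype V] [DecidableEq V] [DecidableEq C]

lemma cl_cons (D : Multiset T) (f : T → C) (c : C) (t : T) :
    cl (t ::ₘ D) f c = if f t = c then t ::ₘ cl D f c else cl D f c := by
  simp only [cl, Multiset.filter_cons]; split <;> simp

lemma card_cl_cons (D : Multiset T) (f : T → C) (c : C) (t : T) :
    Multiset.card (cl (t ::ₘ D) f c)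
      = Multiset.card (cl D f c) + (if f t = c then 1 else 0) := by
  rw [cl_cons]; split <;> simp

lemma count_cl_cons (D : Multiset T) (f : T → C) (c : C) (t : T) (A : T → V) (a : V) :
    ((cl (t ::ₘ D) f c).map A).count a
      = ((cl D f c).map A).count a + (if f t = c ∧ A t = a then 1 else 0) := by
  rw [cl_cons]
  by_cases h : f t = c
  · simp only [h, if_true, Multiset.map_cons, Multiset.count_cons, true_and]
    split <;> simp_all [eq_comm]
  · simp [h]

lemma count_map_cons (D : Multiset T) (t : T) (A : T → V) (a : V) :
    (((t ::ₘ D)).map A).count a = (D.map A).count a + (if A t = a then 1 else 0) := by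
  simp only [Multiset.map_cons, Multiset.count_cons]
  split <;> simp_all [eq_comm]

lemma cl_le (D : Multiset T) (f : T → C) (c : C) : cl D f c ≤ D := Multiset.filter_le _ _

lemma card_cl_le (D : Multiset T) (f : T → C) (c : C) :
    Multiset.card (cl D f c) ≤ Multiset.card D := Multiset.card_le_card (cl_le D f c)

lemma count_cl_le_count (D : Multiset T) (f : T → C) (c : C) (A : T → V) (a : V) :
    ((cl D f c).map A).count a ≤ (D.map A).count a :=
  Multiset.count_le_of_le _ (Multiset.map_le_map (cl_le D f c))

lemma count_le_card_cl (D : Multiset T) (f : T → C) (c : C) (A : T → V) (a : V) :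
    ((cl D f c).map A).count a ≤ Multiset.card (cl D f c) := by
  simpa using Multiset.count_le_card a ((cl D f c).map A)

lemma sum_count_univ (M : Multiset V) : ∑ a : V, (M.count a : ℝ) = Multiset.card M := by
  rw [← Nat.cast_sum]
  exact_mod_cast congrArg Nat.cast (Multiset.sum_count_eq_card fun a _ => Finset.mem_univ a)

lemma sum_ind (v : V) : ∑ a : V, (if v = a then (1:ℝ) else 0) = 1 := by simp

lemma intp_sens (D : Multiset T) (t : T) (f : T → C) (c : C) (A : T → V) :
    |Intp (t ::ₘ D) f c A - Intp D f c A| ≤ 1 := by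
  rcases Nat.eq_zero_or_pos (Multiset.card D) with h0 | hpos
  · have hD : D = 0 := Multiset.card_eq_zero.mp h0
    subst hD
    by_cases h : f t = c <;>
      simp [Intp, cl, Multiset.filter_singleton, h]
  · -- notation
    set N : ℝ := (Multiset.card D : ℝ) with hNdef
    have hN1 : (1:ℝ) ≤ N := by rw [hNdef]; exact_mod_cast hpos
    set s : ℝ := (Multiset.card (cl D f c) : ℝ) with hsdef
    have hs0 : (0:ℝ) ≤ s := Nat.cast_nonneg _
    have hsN : s ≤ N := by rw [hsdef, hNdef]; exact_mod_cast card_cl_le D f c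
    set e : ℝ := if f t = c then 1 else 0 with hedef
    have he01 : e = 0 ∨ e = 1 := by by_cases h : f t = c <;> simp [hedef, h]
    set cnt : V → ℝ := fun a => ((D.map A).count a : ℝ) with hcntdef
    set kk : V → ℝ := fun a => (((cl D f c).map A).count a : ℝ) with hkkdef
    set δ : V → ℝ := fun a => if A t = a then 1 else 0 with hδdef
    have hδ0 : ∀ a, 0 ≤ δ a := by intro a; by_cases h : A t = a <;> simp [hδdef, h]
    have hcnt0 : ∀ a, 0 ≤ cnt a := fun a => Nat.cast_nonneg _
    have hcard' : ((Multiset.card (t ::ₘ D)) : ℝ) = N + 1 := by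
      simp [hNdef]
    have hcardcl' : ((Multiset.card (cl (t ::ₘ D) f c)) : ℝ) = s + e := by
      rw [card_cl_cons]; push_cast; by_cases h : f t = c <;> simp [hsdef, hedef, h]
    have hcnt' : ∀ a, (((t ::ₘ D).map A).count a : ℝ) = cnt a + δ a := by
      intro a; rw [count_map_cons]; push_cast
      by_cases h : A t = a <;> simp [hcntdef, hδdef, h]
    have hkk' : ∀ a, (((cl (t ::ₘ D) f c).map A).count a : ℝ) = kk a + e * δ a := by
      intro a; rw [count_cl_cons]; push_cast
      by_cases h1 : f t = c <;> by_cases h2 : A t = a <;>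
        simp [hkkdef, hedef, hδdef, h1, h2]
    have hNpos : (0:ℝ) < N := by linarith
    have hN1pos : (0:ℝ) < N + 1 := by linarith
    have hrw : Intp (t ::ₘ D) f c A
        = (1/2) * ∑ a : V, |kk a + e * δ a - ((s + e)/(N+1)) * (cnt a + δ a)| := by
      unfold Intp
      congr 1
      refine Finset.sum_congr rfl fun a _ => ?_
      rw [hkk' a, hcnt' a, hcard', hcardcl']
    have hrw2 : Intp D f c A = (1/2) * ∑ a : V, |kk a - (s/N) * cnt a| := rfl
    rw [hrw, hrw2, ← mul_sub, ← Finset.sum_sub_distrib, abs_mul]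
    have habs2 : |(1:ℝ)/2| = 1/2 := by norm_num
    rw [habs2]
    have key : ∀ a : V,
        |(|kk a + e * δ a - ((s + e)/(N+1)) * (cnt a + δ a)|) - (|kk a - (s/N) * cnt a|)|
          ≤ (1/(N+1)) * (N * δ a + cnt a) := by
      intro a
      have h1 : (kk a + e * δ a - ((s + e)/(N+1)) * (cnt a + δ a)) - (kk a - (s/N) * cnt a)
          = ((e*N - s)/(N*(N+1))) * (N * δ a - cnt a) := by
        field_simp
        ring
      calc |(|kk a + e * δ a - ((s + e)/(N+1)) * (cnt a + δ a)|) - (|kk a - (s/N) * cnt a|)|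
          ≤ |(kk a + e * δ a - ((s + e)/(N+1)) * (cnt a + δ a)) - (kk a - (s/N) * cnt a)| :=
            abs_abs_sub_abs_le_abs_sub _ _
        _ = |(e*N - s)/(N*(N+1))| * |N * δ a - cnt a| := by rw [h1, abs_mul]
        _ ≤ (N/(N*(N+1))) * (N * δ a + cnt a) := by
            apply mul_le_mul
            · rw [abs_div, abs_of_pos (by positivity : (0:ℝ) < N*(N+1))]
              apply div_le_div_of_nonneg_right ?_ (by positivity)
              · rw [abs_le]; rcases he01 with h | h <;> constructor <;> nlinarith
            · calc |N * δ a - cnt a| ≤ |N * δ a| + |cnt a| := abs_sub _ _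
                _ = N * δ a + cnt a := by
                    rw [abs_of_nonneg (by positivity), abs_of_nonneg (hcnt0 a)]
            · exact abs_nonneg _
            · positivity
        _ = (1/(N+1)) * (N * δ a + cnt a) := by
            congr 1
            rw [div_eq_div_iff (by positivity) (by positivity)]
            ring
    calc (1/2) * |∑ a : V, ((|kk a + e * δ a - ((s + e)/(N+1)) * (cnt a + δ a)|)
            - (|kk a - (s/N) * cnt a|))|
        ≤ (1/2) * ∑ a : V, |(|kk a + e * δ a - ((s + e)/(N+1)) * (cnt a + δ a)|)
            - (|kk a - (s/N) * cnt a|)| := by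
          gcongr
          exact Finset.abs_sum_le_sum_abs _ _
      _ ≤ (1/2) * ∑ a : V, (1/(N+1)) * (N * δ a + cnt a) := by
          have := Finset.sum_le_sum (fun a (_ : a ∈ Finset.univ) => key a)
          nlinarith [this]
      _ = (1/2) * ((1/(N+1)) * (N * 1 + N)) := by
          rw [← Finset.mul_sum, Finset.sum_add_distrib, ← Finset.mul_sum,
            sum_ind (A t), sum_count_univ]
          simp [hcntdef, hNdef]
      _ ≤ 1 := by
          have h : (1:ℝ)/2 * ((1/(N+1)) * (N * 1 + N)) = N/(N+1) := by
            field_simp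
            norm_num
          rw [h, div_le_one hN1pos]; linarith

lemma sufp_sens (D : Multiset T) (t : T) (f : T → C) (c : C) (A : T → V) :
    |Sufp (t ::ₘ D) f c A - Sufp D f c A| ≤ 1 := by
  set k : ℕ := ((cl D f c).map A).count (A t) with hkdef
  set n : ℕ := (D.map A).count (A t) with hndef
  have hkn : k ≤ n := count_cl_le_count D f c A (A t)
  have hn' : (((t ::ₘ D).map A).count (A t)) = n + 1 := by
    rw [count_map_cons]; simp; rfl
  have hk' : ((cl (t ::ₘ D) f c).map A).count (A t)
      = k + (if f t = c then 1 else 0) := by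
    rw [count_cl_cons]; simp; rfl
  have hsum : Sufp (t ::ₘ D) f c A - Sufp D f c A =
      (if 0 < k + (if f t = c then 1 else 0) then
        (((k + (if f t = c then 1 else 0) : ℕ)) : ℝ)^2 / ((n : ℝ) + 1) else 0)
      - (if 0 < k then (k : ℝ)^2 / (n : ℝ) else 0) := by
    unfold Sufp
    rw [← Finset.sum_sub_distrib, Finset.sum_eq_single (A t)]
    · rw [hn', hk']; push_cast; ring_nf; rfl
    · intro b _ hb
      have h1 : ((cl (t ::ₘ D) f c).map A).count b = ((cl D f c).map A).count b := by
        rw [count_cl_cons]; simp [Ne.symm hb]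
      have h2 : (((t ::ₘ D)).map A).count b = (D.map A).count b := by
        rw [count_map_cons]; simp [Ne.symm hb]
      rw [h1, h2]; ring
    · intro h; exact absurd (Finset.mem_univ (A t)) h
  rw [hsum]
  by_cases hc : f t = c <;> by_cases hk0 : k = 0
  · simp only [hk0, hc, if_true]
    norm_num
    rw [abs_of_pos (by positivity : (0:ℝ) < (n:ℝ)+1)]
    have h0 : (0:ℝ) ≤ ((n:ℝ)+1)⁻¹ := by positivity
    have h1 : ((n:ℝ)+1)⁻¹ ≤ 1 := by
      apply inv_le_one_of_one_le₀
      have : (0:ℝ) ≤ (n:ℝ) := Nat.cast_nonneg _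
      linarith
    linarith
  · have hk1 : 1 ≤ k := Nat.one_le_iff_ne_zero.mpr hk0
    have hn1 : 1 ≤ n := le_trans hk1 hkn
    have hkr : (1:ℝ) ≤ (k:ℝ) := by exact_mod_cast hk1
    have hnr : (1:ℝ) ≤ (n:ℝ) := by exact_mod_cast hn1
    have hknr : (k:ℝ) ≤ (n:ℝ) := by exact_mod_cast hkn
    simp only [hc, if_true]
    rw [if_pos (by omega), if_pos (by omega)]
    push_cast
    rw [abs_le]
    constructor
    · have h1 : (k:ℝ)^2/(n:ℝ) ≤ ((k:ℝ)+1)^2/((n:ℝ)+1) := by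
        rw [div_le_div_iff₀ (by linarith) (by linarith)]
        nlinarith
      linarith
    · have h1 : ((k:ℝ)+1)^2/((n:ℝ)+1) ≤ (k:ℝ)^2/(n:ℝ) + 1 := by
        rw [div_le_iff₀ (by linarith)]
        have h2 : (k:ℝ)^2/(n:ℝ) * (n:ℝ) = (k:ℝ)^2 := by field_simp
        nlinarith [sq_nonneg ((n:ℝ) - (k:ℝ))]
      linarith
  · simp [hk0, hc]
  · have hk1 : 1 ≤ k := Nat.one_le_iff_ne_zero.mpr hk0
    have hn1 : 1 ≤ n := le_trans hk1 hkn
    have hkr : (1:ℝ) ≤ (k:ℝ) := by exact_mod_cast hk1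
    have hnr : (1:ℝ) ≤ (n:ℝ) := by exact_mod_cast hn1
    have hknr : (k:ℝ) ≤ (n:ℝ) := by exact_mod_cast hkn
    simp only [hc, if_false]
    rw [if_pos (by omega), if_pos (by omega)]
    push_cast
    have hdiff : (k:ℝ)^2/((n:ℝ)+1) - (k:ℝ)^2/(n:ℝ) = -((k:ℝ)^2/((n:ℝ)*((n:ℝ)+1))) := by
      field_simp; ring
    norm_num
    rw [hdiff, abs_neg, abs_of_nonneg (by positivity)]
    rw [div_le_one (by positivity)]
    nlinarith

lemma pdiv_comm (D : Multiset T) (f : T → C) (c c' : C) (A : T → V) :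
    pdiv D f c c' A A = pdiv D f c' c A A := by
  unfold pdiv
  rw [if_pos rfl, if_pos rfl, min_comm]
  congr 2
  exact Finset.sum_congr rfl fun a _ => abs_sub_comm _ _

/-- pull a scalar into a half-sum of absolute values -/
lemma pull_scalar {r : ℝ} (g : V → ℝ) (q : V → ℝ) (hr : r = 0 ∨ 1 ≤ r)
    (hg0 : ∀ a, 0 ≤ g a) (hgr : ∀ a, g a ≤ r) :
    r * ((1/2) * ∑ a : V, |g a / (max r 1) - q a|)
      = (1/2) * ∑ a : V, |g a - r * q a| := by
  rcases hr with hr0 | hr1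
  · subst hr0
    have hg : ∀ a, g a = 0 := fun a => le_antisymm (hgr a) (hg0 a)
    simp [hg]
  · have hmaxr : max r 1 = r := max_eq_left hr1
    have hrpos : (0:ℝ) < r := by linarith
    rw [hmaxr, ← mul_assoc, mul_comm r (1/2:ℝ), mul_assoc, Finset.mul_sum]
    congr 1
    refine Finset.sum_congr rfl fun a _ => ?_
    have hx : (g a / r - q a) * r = g a - r * q a := by field_simp
    calc r * |g a / r - q a| = |g a / r - q a| * |r| := by rw [abs_of_pos hrpos, mul_comm]

      _ = |(g a / r - q a) * r| := (abs_mul _ _).symm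
      _ = |g a - r * q a| := by rw [hx]

lemma pdiv_sens_left (D : Multiset T) (t : T) (f : T → C) (c c' : C) (A : T → V)
    (hc : f t = c) (hcc' : c ≠ c') :
    |pdiv (t ::ₘ D) f c c' A A - pdiv D f c c' A A| ≤ 1 := by
  have hclc : cl (t ::ₘ D) f c = t ::ₘ cl D f c := by rw [cl_cons, if_pos hc]
  have hclc' : cl (t ::ₘ D) f c' = cl D f c' := by
    rw [cl_cons, if_neg (fun h => hcc' (hc.symm.trans h))]
  unfold pdiv
  rw [hclc, hclc', if_pos rfl, if_pos rfl]
  simp only [Multiset.card_cons, Nat.cast_add, Nat.cast_one]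
  set S : ℝ := (Multiset.card (cl D f c) : ℝ) with hSdef
  set U : ℝ := (Multiset.card (cl D f c') : ℝ) with hUdef
  have hS0 : (0:ℝ) ≤ S := Nat.cast_nonneg _
  have hU0 : (0:ℝ) ≤ U := Nat.cast_nonneg _
  have hSalt : S = 0 ∨ 1 ≤ S := by
    rcases Nat.eq_zero_or_pos (Multiset.card (cl D f c)) with h | h
    · left; rw [hSdef, h]; norm_num
    · right; rw [hSdef]; exact_mod_cast h
  have hmaxS1 : max (S + 1) 1 = S + 1 := max_eq_left (by linarith)
  set kk : V → ℝ := fun a => (((cl D f c).map A).count a : ℝ) with hkk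
  set mm : V → ℝ := fun a => (((cl D f c').map A).count a : ℝ) with hmm
  set δ : V → ℝ := fun a => if A t = a then (1:ℝ) else 0 with hδ
  have hδ0 : ∀ a, 0 ≤ δ a := by intro a; by_cases h : A t = a <;> simp [hδ, h]
  have hδ1 : ∀ a, δ a ≤ 1 := by intro a; by_cases h : A t = a <;> simp [hδ, h]
  have hkk0 : ∀ a, 0 ≤ kk a := fun a => Nat.cast_nonneg _
  have hmm0 : ∀ a, 0 ≤ mm a := fun a => Nat.cast_nonneg _
  have hkks : ∀ a, kk a ≤ S := by
    intro a; rw [hkk, hSdef]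
    exact Nat.cast_le.mpr (count_le_card_cl D f c A a)
  have hmmu : ∀ a, mm a ≤ U := by
    intro a; rw [hmm, hUdef]
    exact Nat.cast_le.mpr (count_le_card_cl D f c' A a)
  have hsumk : ∑ a : V, kk a = S := by
    rw [hkk, hSdef]; simpa using sum_count_univ ((cl D f c).map A)
  have hsumm : ∑ a : V, mm a = U := by
    rw [hmm, hUdef]; simpa using sum_count_univ ((cl D f c').map A)
  have hsumδ : ∑ a : V, δ a = 1 := sum_ind (A t)
  have hcnt' : ∀ a : V, (((t ::ₘ cl D f c).map A).count a : ℝ) = kk a + δ a := by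
    intro a; rw [count_map_cons]; push_cast
    by_cases h : A t = a <;> simp [hkk, hδ, h]
  by_cases hU00 : U = 0
  · have hmin1 : min (S + 1) U = U := min_eq_right (by rw [hU00]; linarith)
    have hmin2 : min S U = U := min_eq_right (by rw [hU00]; linarith)
    rw [hmin1, hmin2, hU00]
    simp
  have hU1 : (1:ℝ) ≤ U := by
    have : (1:ℕ) ≤ Multiset.card (cl D f c') := by
      by_contra h
      exact hU00 (by rw [hUdef]; exact_mod_cast Nat.lt_one_iff.mp (not_le.mp h))
    rw [hUdef]; exact_mod_cast this
  have hUpos : (0:ℝ) < U := by linarith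
  have hmaxU : max U 1 = U := max_eq_left hU1
  rcases le_or_gt U S with hle | hlt
  · -- U ≤ S, hence S ≥ 1
    have hS1 : (1:ℝ) ≤ S := le_trans hU1 hle
    have hSpos : (0:ℝ) < S := by linarith
    have hS1pos : (0:ℝ) < S + 1 := by linarith
    have hmaxS : max S 1 = S := max_eq_left hS1
    have hmin1 : min (S + 1) U = U := min_eq_right (by linarith)
    have hmin2 : min S U = U := min_eq_right hle
    rw [hmin1, hmin2, hmaxS, hmaxU, hmaxS1]
    rw [← mul_sub, abs_mul, abs_of_nonneg hU0, ← mul_sub, ← Finset.sum_sub_distrib, abs_mul]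
    have key : ∀ a : V,
        |(|(((t ::ₘ cl D f c).map A).count a : ℝ)/(S+1) - mm a/U|) - (|kk a/S - mm a/U|)|
          ≤ δ a/(S+1) + kk a/(S*(S+1)) := by
      intro a
      rw [hcnt' a]
      have h1 : ((kk a + δ a)/(S+1) - mm a/U) - (kk a/S - mm a/U)
          = δ a/(S+1) - kk a/(S*(S+1)) := by
        field_simp; ring
      calc |(|(kk a + δ a)/(S+1) - mm a/U|) - (|kk a/S - mm a/U|)|
          ≤ |((kk a + δ a)/(S+1) - mm a/U) - (kk a/S - mm a/U)| :=
            abs_abs_sub_abs_le_abs_sub _ _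
        _ = |δ a/(S+1) - kk a/(S*(S+1))| := by rw [h1]
        _ ≤ δ a/(S+1) + kk a/(S*(S+1)) := by
            refine (abs_sub _ _).trans ?_
            rw [abs_of_nonneg (by positivity), abs_of_nonneg (by positivity)]
    have hsum_bound : |∑ a : V,
        ((|(((t ::ₘ cl D f c).map A).count a : ℝ)/(S+1) - mm a/U|) - (|kk a/S - mm a/U|))|
          ≤ 2/(S+1) := by
      calc |∑ a : V, ((|(((t ::ₘ cl D f c).map A).count a : ℝ)/(S+1) - mm a/U|)
              - (|kk a/S - mm a/U|))|
          ≤ ∑ a : V, |(|(((t ::ₘ cl D f c).map A).count a : ℝ)/(S+1) - mm a/U|)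
              - (|kk a/S - mm a/U|)| := Finset.abs_sum_le_sum_abs _ _
        _ ≤ ∑ a : V, (δ a/(S+1) + kk a/(S*(S+1))) := Finset.sum_le_sum fun a _ => key a
        _ = 2/(S+1) := by
            rw [Finset.sum_add_distrib, ← Finset.sum_div, ← Finset.sum_div, hsumδ, hsumk]
            field_simp
            ring
    calc U * (|(1:ℝ)/2| * |∑ a : V,
          ((|(((t ::ₘ cl D f c).map A).count a : ℝ)/(S+1) - mm a/U|) - (|kk a/S - mm a/U|))|)
        ≤ U * ((1/2) * (2/(S+1))) := by
          have h2 : |(1:ℝ)/2| = 1/2 := by norm_num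
          rw [h2]
          exact mul_le_mul_of_nonneg_left
            (mul_le_mul_of_nonneg_left hsum_bound (by norm_num)) hU0
      _ = U/(S+1) := by field_simp
      _ ≤ 1 := by rw [div_le_one hS1pos]; linarith
  · -- S < U
    have hmin1 : min (S + 1) U = S + 1 := min_eq_left (by
      have : (Multiset.card (cl D f c) : ℝ) < (Multiset.card (cl D f c') : ℝ) := hlt
      have hnat : Multiset.card (cl D f c) < Multiset.card (cl D f c') := by exact_mod_cast this
      have : (Multiset.card (cl D f c) : ℝ) + 1 ≤ (Multiset.card (cl D f c') : ℝ) := by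
        exact_mod_cast hnat
      exact this)
    have hmin2 : min S U = S := min_eq_left (le_of_lt hlt)
    rw [hmin1, hmin2, hmaxU, hmaxS1]
    have hsumq : ∑ a : V, mm a / U = 1 := by
      rw [← Finset.sum_div, hsumm, div_self (ne_of_gt hUpos)]
    have e1 : S * ((1/2) * ∑ a : V, |kk a/(max S 1) - mm a / U|)
        = (1/2) * ∑ a : V, |kk a - S * (mm a / U)| :=
      pull_scalar kk (fun a => mm a / U) hSalt hkk0 hkks
    have e2 : (S+1) * ((1/2) * ∑ a : V, |(kk a + δ a)/(max (S+1) 1) - mm a / U|)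
        = (1/2) * ∑ a : V, |(kk a + δ a) - (S+1) * (mm a / U)| :=
      pull_scalar (fun a => kk a + δ a) (fun a => mm a / U) (Or.inr (by linarith))
        (fun a => add_nonneg (hkk0 a) (hδ0 a)) (fun a => by
          have h1 := hkks a; have h2 := hδ1 a; linarith)
    rw [hmaxS1] at e2
    have goal_eq : (S+1) * ((1/2) * ∑ a : V,
          |(((t ::ₘ cl D f c).map A).count a : ℝ)/(S+1) - mm a/U|)
        - S * ((1/2) * ∑ a : V, |kk a/(max S 1) - mm a/U|)
        = (1/2) * ∑ a : V,
            ((|(kk a + δ a) - (S+1) * (mm a / U)|) - (|kk a - S * (mm a / U)|)) := by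
      have h2 : (S+1) * ((1/2) * ∑ a : V,
            |(((t ::ₘ cl D f c).map A).count a : ℝ)/(S+1) - mm a/U|)
          = (1/2) * ∑ a : V, |(kk a + δ a) - (S+1) * (mm a / U)| := by
        rw [← e2]
        congr 2
        exact Finset.sum_congr rfl fun a _ => by rw [hcnt' a]
      rw [h2, e1, ← mul_sub, ← Finset.sum_sub_distrib]
    rw [goal_eq, abs_mul]
    have habs2 : |(1:ℝ)/2| = 1/2 := by norm_num
    rw [habs2]
    have key : ∀ a : V,
        |(|(kk a + δ a) - (S+1) * (mm a / U)|) - (|kk a - S * (mm a / U)|)|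
          ≤ δ a + mm a / U := by
      intro a
      calc |(|(kk a + δ a) - (S+1) * (mm a / U)|) - (|kk a - S * (mm a / U)|)|
          ≤ |((kk a + δ a) - (S+1) * (mm a / U)) - (kk a - S * (mm a / U))| :=
            abs_abs_sub_abs_le_abs_sub _ _
        _ = |δ a - mm a / U| := by ring_nf
        _ ≤ δ a + mm a / U := by
            refine (abs_sub _ _).trans ?_
            rw [abs_of_nonneg (hδ0 a), abs_of_nonneg (by positivity : (0:ℝ) ≤ mm a / U)]
    calc (1:ℝ)/2 * |∑ a : V,
          ((|(kk a + δ a) - (S+1) * (mm a / U)|) - (|kk a - S * (mm a / U)|))|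
        ≤ (1/2) * ∑ a : V, (δ a + mm a / U) := by
          apply mul_le_mul_of_nonneg_left _ (by norm_num)
          exact (Finset.abs_sum_le_sum_abs _ _).trans (Finset.sum_le_sum fun a _ => key a)
      _ = 1 := by rw [Finset.sum_add_distrib, hsumδ, hsumq]; norm_num

lemma pdiv_sens (D : Multiset T) (t : T) (f : T → C) (c c' : C) (Ac Ac' : T → V)
    (hne : (c, Ac) ≠ (c', Ac')) :
    |pdiv (t ::ₘ D) f c c' Ac Ac' - pdiv D f c c' Ac Ac'| ≤ 1 := by
  by_cases hA : Ac = Ac'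
  · subst hA
    have hcc' : c ≠ c' := fun h => hne (by rw [h])
    by_cases h1 : f t = c
    · exact pdiv_sens_left D t f c c' Ac h1 hcc'
    · by_cases h2 : f t = c'
      · rw [pdiv_comm (t ::ₘ D) f c c' Ac, pdiv_comm D f c c' Ac]
        exact pdiv_sens_left D t f c' c Ac h2 hcc'.symm
      · have e1 : cl (t ::ₘ D) f c = cl D f c := by rw [cl_cons, if_neg h1]
        have e2 : cl (t ::ₘ D) f c' = cl D f c' := by rw [cl_cons, if_neg h2]
        unfold pdiv
        rw [e1, e2]
        simp
  · -- different attributes: pdiv = min of cards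
    unfold pdiv
    rw [if_neg hA, if_neg hA, mul_one, mul_one]
    set S : ℝ := (Multiset.card (cl D f c) : ℝ) with hSdef
    set U : ℝ := (Multiset.card (cl D f c') : ℝ) with hUdef
    have hS' : (Multiset.card (cl (t ::ₘ D) f c) : ℝ) = S + (if f t = c then 1 else 0) := by
      rw [cl_cons]; by_cases h : f t = c <;> simp [hSdef, h]
    have hU' : (Multiset.card (cl (t ::ₘ D) f c') : ℝ) = U + (if f t = c' then 1 else 0) := by
      rw [cl_cons]; by_cases h : f t = c' <;> simp [hUdef, h]
    rw [hS', hU']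
    have hS0 : (0:ℝ) ≤ S := Nat.cast_nonneg _
    have hU0 : (0:ℝ) ≤ U := Nat.cast_nonneg _
    set a1 : ℝ := (if f t = c then (1:ℝ) else 0) with ha1
    set a2 : ℝ := (if f t = c' then (1:ℝ) else 0) with ha2
    have ha1b : 0 ≤ a1 ∧ a1 ≤ 1 := by rw [ha1]; split <;> norm_num
    have ha2b : 0 ≤ a2 ∧ a2 ≤ 1 := by rw [ha2]; split <;> norm_num
    have h1 : min S U ≤ min (S + a1) (U + a2) := by
      apply min_le_min <;> linarith [ha1b.1, ha2b.1]
    have h2 : min (S + a1) (U + a2) ≤ min S U + 1 := by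
      have h3 : min (S + a1) (U + a2) ≤ min (S + 1) (U + 1) := by
        apply min_le_min <;> linarith [ha1b.2, ha2b.2]
      have h4 : min (S + 1) (U + 1) = min S U + 1 := by
        rw [← min_add_add_right]
      linarith
    rw [abs_le]
    constructor <;> linarith


lemma mem_Cand {AC : C → Finset (T → V)} {p : C × (T → V)} [Fintype C] :
    p ∈ Cand AC ↔ p.2 ∈ AC p.1 := by
  unfold Cand
  simp only [Finset.mem_biUnion, Finset.mem_univ, true_and, Finset.mem_image]
  constructor
  · rintro ⟨c, A, hA, h⟩; rw [← h]; exact hA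
  · intro h; exact ⟨p.1, p.2, h, rfl⟩

end sens_helpers

/-- The extended global score for multi-attribute explanations has sensitivity at
most `1`: for `ℓ ≥ 1`, `|C| ≥ 2`, `AC` assigning each label a set of `ℓ` attributes,
and nonnegative weights summing to `1`, adding one tuple changes `GlScore_λ^ℓ` by at
most `1`. -/
theorem glscore_multi_sensitivity {T V C : Type*} [Fintype V] [DecidableEq V]
    [Fintype C] [DecidableEq C]
    (ℓ : ℕ) (hl : 1 ≤ ℓ) (hC : 2 ≤ Fintype.card C)
    (f : T → C) (AC : C → Finset (T → V)) (hAC : ∀ c : C, (AC c).card = ℓ)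
    (wInt wSuf wDiv : ℝ) (hInt : 0 ≤ wInt) (hSuf : 0 ≤ wSuf) (hDiv : 0 ≤ wDiv)
    (hsum : wInt + wSuf + wDiv = 1) :
    ∀ (D : Multiset T) (t : T),
      |GlScoreL wInt wSuf wDiv (t ::ₘ D) f AC - GlScoreL wInt wSuf wDiv D f AC| ≤ 1 := by
  intro D t
  set n : ℕ := (Cand AC).card with hndef
  have hn2 : 2 ≤ n := by
    rw [hndef]
    show 1 < (Cand AC).card
    rw [Finset.one_lt_card]
    obtain ⟨c1, c2, hcc⟩ := Fintype.exists_pair_of_one_lt_card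
      (by omega : 1 < Fintype.card C)
    obtain ⟨A1, hA1⟩ := Finset.card_pos.mp (by rw [hAC c1]; omega)
    obtain ⟨A2, hA2⟩ := Finset.card_pos.mp (by rw [hAC c2]; omega)
    refine ⟨(c1, A1), ?_, (c2, A2), ?_, ?_⟩
    · exact mem_Cand.mpr hA1
    · exact mem_Cand.mpr hA2
    · intro h; exact hcc (Prod.ext_iff.mp h).1
  have hnr : (2:ℝ) ≤ (n:ℝ) := by exact_mod_cast hn2
  have hnpos : (0:ℝ) < (n:ℝ) := by linarith
  have hIchoose : ((n.choose 2 : ℕ) : ℝ) = (n:ℝ) * ((n:ℝ) - 1) / 2 :=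
    Nat.cast_choose_two ℝ n
  have hchoosepos : (0:ℝ) < ((n.choose 2 : ℕ) : ℝ) := by
    rw [hIchoose]; nlinarith
  set EI : ℝ := (∑ p ∈ Cand AC, Intp (t ::ₘ D) f p.1 p.2)
    - (∑ p ∈ Cand AC, Intp D f p.1 p.2) with hEI
  set ES : ℝ := (∑ p ∈ Cand AC, Sufp (t ::ₘ D) f p.1 p.2)
    - (∑ p ∈ Cand AC, Sufp D f p.1 p.2) with hES
  set ED : ℝ := (∑ p ∈ Cand AC, ∑ q ∈ Cand AC,
      (if p = q then 0 else pdiv (t ::ₘ D) f p.1 q.1 p.2 q.2))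
    - (∑ p ∈ Cand AC, ∑ q ∈ Cand AC,
      (if p = q then 0 else pdiv D f p.1 q.1 p.2 q.2)) with hED
  have bI : |EI| ≤ (n:ℝ) := by
    rw [hEI, ← Finset.sum_sub_distrib]
    calc |∑ p ∈ Cand AC, (Intp (t ::ₘ D) f p.1 p.2 - Intp D f p.1 p.2)|
        ≤ ∑ p ∈ Cand AC, |Intp (t ::ₘ D) f p.1 p.2 - Intp D f p.1 p.2| :=
          Finset.abs_sum_le_sum_abs _ _
      _ ≤ ∑ _p ∈ Cand AC, (1:ℝ) :=
          Finset.sum_le_sum fun p _ => intp_sens D t f p.1 p.2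
      _ = (n:ℝ) := by rw [Finset.sum_const, hndef]; simp
  have bS : |ES| ≤ (n:ℝ) := by
    rw [hES, ← Finset.sum_sub_distrib]
    calc |∑ p ∈ Cand AC, (Sufp (t ::ₘ D) f p.1 p.2 - Sufp D f p.1 p.2)|
        ≤ ∑ p ∈ Cand AC, |Sufp (t ::ₘ D) f p.1 p.2 - Sufp D f p.1 p.2| :=
          Finset.abs_sum_le_sum_abs _ _
      _ ≤ ∑ _p ∈ Cand AC, (1:ℝ) :=
          Finset.sum_le_sum fun p _ => sufp_sens D t f p.1 p.2
      _ = (n:ℝ) := by rw [Finset.sum_const, hndef]; simp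
  have bD : |ED| ≤ (n:ℝ) * ((n:ℝ) - 1) := by
    rw [hED, ← Finset.sum_sub_distrib]
    have inner : ∀ p ∈ Cand AC,
        |(∑ q ∈ Cand AC, (if p = q then 0 else pdiv (t ::ₘ D) f p.1 q.1 p.2 q.2))
          - (∑ q ∈ Cand AC, (if p = q then 0 else pdiv D f p.1 q.1 p.2 q.2))|
          ≤ (n:ℝ) - 1 := by
      intro p hp
      rw [← Finset.sum_sub_distrib]
      calc |∑ q ∈ Cand AC, ((if p = q then 0 else pdiv (t ::ₘ D) f p.1 q.1 p.2 q.2)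
              - (if p = q then 0 else pdiv D f p.1 q.1 p.2 q.2))|
          ≤ ∑ q ∈ Cand AC, |(if p = q then 0 else pdiv (t ::ₘ D) f p.1 q.1 p.2 q.2)
              - (if p = q then 0 else pdiv D f p.1 q.1 p.2 q.2)| :=
            Finset.abs_sum_le_sum_abs _ _
        _ ≤ ∑ q ∈ Cand AC, (if p = q then 0 else (1:ℝ)) := by
            refine Finset.sum_le_sum fun q _ => ?_
            by_cases hpq : p = q
            · simp [hpq]
            · rw [if_neg hpq, if_neg hpq, if_neg hpq]
              exact pdiv_sens D t f p.1 q.1 p.2 q.2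
                (fun h => hpq (Prod.ext (congrArg Prod.fst h) (congrArg Prod.snd h)))
        _ = (n:ℝ) - 1 := by
            have : ∑ q ∈ Cand AC, (if p = q then (0:ℝ) else 1)
                = ∑ q ∈ Cand AC, (1 - if p = q then (1:ℝ) else 0) := by
              refine Finset.sum_congr rfl fun q _ => ?_
              by_cases hpq : p = q <;> simp [hpq]
            rw [this, Finset.sum_sub_distrib, Finset.sum_const, Finset.sum_ite_eq _ p _,
              if_pos hp, hndef]
            simp
    calc |∑ p ∈ Cand AC,
          ((∑ q ∈ Cand AC, (if p = q then 0 else pdiv (t ::ₘ D) f p.1 q.1 p.2 q.2))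
            - (∑ q ∈ Cand AC, (if p = q then 0 else pdiv D f p.1 q.1 p.2 q.2)))|
        ≤ ∑ p ∈ Cand AC,
          |(∑ q ∈ Cand AC, (if p = q then 0 else pdiv (t ::ₘ D) f p.1 q.1 p.2 q.2))
            - (∑ q ∈ Cand AC, (if p = q then 0 else pdiv D f p.1 q.1 p.2 q.2))| :=
          Finset.abs_sum_le_sum_abs _ _
      _ ≤ ∑ _p ∈ Cand AC, ((n:ℝ) - 1) := Finset.sum_le_sum inner
      _ = (n:ℝ) * ((n:ℝ) - 1) := by rw [Finset.sum_const, hndef]; simp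
  have hexpand : GlScoreL wInt wSuf wDiv (t ::ₘ D) f AC - GlScoreL wInt wSuf wDiv D f AC
      = wInt * ((1/(n:ℝ)) * EI) + wSuf * ((1/(n:ℝ)) * ES)
        + wDiv * ((1/((n.choose 2 : ℕ):ℝ)) * ((1/2) * ED)) := by
    unfold GlScoreL
    rw [hEI, hES, hED, ← hndef]
    ring
  rw [hexpand]
  have tI : |wInt * ((1/(n:ℝ)) * EI)| ≤ wInt := by
    rw [abs_mul, abs_mul, abs_of_nonneg hInt, abs_of_nonneg (by positivity : (0:ℝ) ≤ 1/(n:ℝ))]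
    calc wInt * (1/(n:ℝ) * |EI|) ≤ wInt * (1/(n:ℝ) * (n:ℝ)) := by
          apply mul_le_mul_of_nonneg_left _ hInt
          exact mul_le_mul_of_nonneg_left bI (by positivity)
      _ = wInt := by field_simp
  have tS : |wSuf * ((1/(n:ℝ)) * ES)| ≤ wSuf := by
    rw [abs_mul, abs_mul, abs_of_nonneg hSuf, abs_of_nonneg (by positivity : (0:ℝ) ≤ 1/(n:ℝ))]
    calc wSuf * (1/(n:ℝ) * |ES|) ≤ wSuf * (1/(n:ℝ) * (n:ℝ)) := by
          apply mul_le_mul_of_nonneg_left _ hSuf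
          exact mul_le_mul_of_nonneg_left bS (by positivity)
      _ = wSuf := by field_simp
  have tD : |wDiv * ((1/((n.choose 2 : ℕ):ℝ)) * ((1/2) * ED))| ≤ wDiv := by
    rw [abs_mul, abs_mul, abs_mul, abs_of_nonneg hDiv,
      abs_of_nonneg (by positivity : (0:ℝ) ≤ 1/((n.choose 2 : ℕ):ℝ)),
      abs_of_nonneg (by norm_num : (0:ℝ) ≤ 1/2)]
    calc wDiv * (1/((n.choose 2 : ℕ):ℝ) * (1/2 * |ED|))
        ≤ wDiv * (1/((n.choose 2 : ℕ):ℝ) * (1/2 * ((n:ℝ) * ((n:ℝ) - 1)))) := by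
          apply mul_le_mul_of_nonneg_left _ hDiv
          apply mul_le_mul_of_nonneg_left _ (by positivity)
          apply mul_le_mul_of_nonneg_left bD (by norm_num)
      _ = wDiv := by
          rw [hIchoose]
          have h1 : (n:ℝ) * ((n:ℝ) - 1) ≠ 0 := by nlinarith
          have h2 : (n:ℝ) - 1 ≠ 0 := (by linarith : (n:ℝ) - 1 > 0).ne'
          field_simp
  calc |wInt * ((1/(n:ℝ)) * EI) + wSuf * ((1/(n:ℝ)) * ES)
        + wDiv * ((1/((n.choose 2 : ℕ):ℝ)) * ((1/2) * ED))|
      ≤ |wInt * ((1/(n:ℝ)) * EI) + wSuf * ((1/(n:ℝ)) * ES)|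
        + |wDiv * ((1/((n.choose 2 : ℕ):ℝ)) * ((1/2) * ED))| := abs_add_le _ _
    _ ≤ |wInt * ((1/(n:ℝ)) * EI)| + |wSuf * ((1/(n:ℝ)) * ES)|
        + |wDiv * ((1/((n.choose 2 : ℕ):ℝ)) * ((1/2) * ED))| := by
        have := abs_add_le (wInt * ((1/(n:ℝ)) * EI)) (wSuf * ((1/(n:ℝ)) * ES))
        linarith
    _ ≤ wInt + wSuf + wDiv := by linarith
    _ = 1 := hsum
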